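/- Let G be a d-regular simple graph on n = a(d+1) vertices. Then for all 0 ≤ t ≤ n, the number of independent sets of G of size t satisfies i_t(G) ≥ (d+1)^t · binom(a, t). -/

import Mathlib

open Classical Finset

namespace Paper

variable {V : Type*}

/-- The number of cliques (vertex sets inducing complete subgraphs, including
the empty set and singletons) of a graph. -/
noncomputable def cliqueCount [Fintype V] (G : SimpleGraph V) : ℕ :=
  (Finset.univ.filter fun s : Finset V => G.IsClique (s : Set V)).card

/-- The number of cliques of size `t`. -/
noncomputable def cliqueCountSize [Fintype V] (G : SimpleGraph V) (t : ℕ) : ℕ :=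
  (Finset.univ.filter fun s : Finset V => G.IsClique (s : Set V) ∧ s.card = t).card

/-- A finset of vertices is independent if its vertices are pairwise nonadjacent. -/
def IsIndepFinset (G : SimpleGraph V) (s : Finset V) : Prop :=
  (s : Set V).Pairwise fun u v => ¬ G.Adj u v

/-- The number of independent sets (including the empty set) of a graph. -/
noncomputable def indepCount [Fintype V] (G : SimpleGraph V) : ℕ :=
  (Finset.univ.filter fun s : Finset V => IsIndepFinset G s).card

/-- The number of independent sets of size `t`. -/
noncomputable def indepCountSize [Fintype V] (G : SimpleGraph V) (t : ℕ) : ℕ :=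
  (Finset.univ.filter fun s : Finset V => IsIndepFinset G s ∧ s.card = t).card

/-- `S_T`: the set of common neighbors of all vertices of `T`. -/
noncomputable def commonNbrs [Fintype V] (G : SimpleGraph V) (T : Finset V) : Finset V :=
  Finset.univ.filter fun v => ∀ x ∈ T, G.Adj x v

/-- The weight `w(C)` of a clique: the number of common neighbors of its vertices. -/
noncomputable def weight [Fintype V] (G : SimpleGraph V) (T : Finset V) : ℕ :=
  (commonNbrs G T).card

/-- A clique `T` is tight (for max degree bound `r`) if `w(T) = r + 1 - |T|`. -/
def IsTight [Fintype V] (r : ℕ) (G : SimpleGraph V) (T : Finset V) : Prop :=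
  G.IsClique (T : Set V) ∧ weight G T + T.card = r + 1

/-- A cluster is a maximal tight clique. -/
def IsCluster [Fintype V] (r : ℕ) (G : SimpleGraph V) (T : Finset V) : Prop :=
  IsTight r G T ∧ ∀ T' : Finset V, T ⊆ T' → IsTight r G T' → T' = T

/-- The graph `G_T`, obtained from `G` by adding all edges within `S_T` and deleting all
edges between `S_T` and `V(G) \ (T ∪ S_T)`. -/
noncomputable def modGraph [Fintype V] (G : SimpleGraph V) (T : Finset V) : SimpleGraph V :=
  SimpleGraph.fromRel fun u v =>
    (u ∈ commonNbrs G T ∧ v ∈ commonNbrs G T) ∨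
    (G.Adj u v ∧ ¬(u ∈ commonNbrs G T ∧ v ∉ T ∪ commonNbrs G T) ∧
      ¬(v ∈ commonNbrs G T ∧ u ∉ T ∪ commonNbrs G T))

/-- The graph `R_T`: the complement of the subgraph of `G` induced on `S_T`. -/
noncomputable def RT [Fintype V] (G : SimpleGraph V) (T : Finset V) :
    SimpleGraph ((commonNbrs G T : Finset V) : Set V) :=
  (SimpleGraph.induce ((commonNbrs G T : Finset V) : Set V) G)ᶜ

/-- `δ_I`: the minimum degree in `R` over the vertices of `I`. -/
noncomputable def minDegOn {W : Type*} [Fintype W] (R : SimpleGraph W) (I : Finset W) : ℕ :=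
  sInf ((fun x => R.degree x) '' (I : Set W))

/-- The fixed loss `φ(R) = Σ_{∅ ≠ I independent} (2 ^ δ_I - 1)`. -/
noncomputable def fixedLoss {W : Type*} [Fintype W] (R : SimpleGraph W) : ℕ :=
  ∑ I ∈ Finset.univ.filter (fun I : Finset W => I.Nonempty ∧ IsIndepFinset R I),
    (2 ^ minDegOn R I - 1)

/-- The disjoint union of `a` copies of `K_{r+1}` together with one copy of `K_b`. -/
noncomputable def kUnion (a r b : ℕ) : SimpleGraph ((Fin a × Fin (r + 1)) ⊕ Fin b) :=
  SimpleGraph.fromRel fun x y =>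
    match x, y with
    | Sum.inl (i, _), Sum.inl (j, _) => i = j
    | Sum.inr _, Sum.inr _ => True
    | _, _ => False

/-- The disjoint union of `a` copies of `K_3` together with one copy of the cycle `C_m`. -/
noncomputable def triCyc (a m : ℕ) : SimpleGraph ((Fin a × Fin 3) ⊕ Fin m) :=
  SimpleGraph.fromRel fun x y =>
    match x, y with
    | Sum.inl (i, _), Sum.inl (j, _) => i = j
    | Sum.inr u, Sum.inr v => (u.val + 1) % m = v.val
    | _, _ => False

end Paper

open Paper


section Aux
set_option linter.unusedSectionVars false
open Finset
variable {V : Type*} [Fintype V]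

private lemma indep_insert_aux {G : SimpleGraph V} {s : Finset V} {v : V}
    (hs : IsIndepFinset G s) (hv : ∀ u ∈ s, ¬ G.Adj u v) :
    IsIndepFinset G (insert v s) := by
  intro x hx y hy hxy
  simp only [coe_insert, Set.mem_insert_iff, mem_coe] at hx hy
  rcases hx with rfl | hx <;> rcases hy with rfl | hy
  · exact absurd rfl hxy
  · exact fun h => hv y hy h.symm
  · exact hv x hx
  · exact hs hx hy hxy

private lemma indep_subset_aux {G : SimpleGraph V} {s t : Finset V}
    (hst : s ⊆ t) (ht : IsIndepFinset G t) : IsIndepFinset G s :=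
  Set.Pairwise.mono (by exact_mod_cast hst) ht

private lemma count_step (G : SimpleGraph V) (d t : ℕ) (hreg : G.IsRegularOfDegree d) :
    (Fintype.card V - t * (d + 1)) *
      (univ.filter fun s : Finset V => IsIndepFinset G s ∧ s.card = t).card
    ≤ (t + 1) *
      (univ.filter fun s : Finset V => IsIndepFinset G s ∧ s.card = t + 1).card := by
  classical
  set A := univ.filter fun s : Finset V => IsIndepFinset G s ∧ s.card = t with hA
  set B := univ.filter fun s : Finset V => IsIndepFinset G s ∧ s.card = t + 1 with hB
  set P : Finset (Finset V × V) :=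
    (A ×ˢ univ).filter (fun p => p.2 ∉ p.1 ∧ IsIndepFinset G (insert p.2 p.1)) with hP
  have h1 : (Fintype.card V - t * (d + 1)) * A.card ≤ P.card := by
    have hfib : P.card = ∑ S ∈ A, (P.filter fun p => p.1 = S).card := by
      apply card_eq_sum_card_fiberwise
      intro p hp
      have hp : p ∈ P := hp
      simp only [hP, mem_filter, mem_product] at hp
      exact hp.1.1
    rw [hfib]
    have hbound : ∀ S ∈ A, Fintype.card V - t * (d + 1) ≤ (P.filter fun p => p.1 = S).card := by
      intro S hS
      simp only [hA, mem_filter, mem_univ, true_and] at hS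
      -- the set of valid extensions
      set E := univ.filter (fun v => v ∉ S ∧ IsIndepFinset G (insert v S)) with hE
      have hEcard : (P.filter fun p => p.1 = S).card = E.card := by
        apply card_nbij' (fun p => p.2) (fun v => (S, v))
        · intro p hp
          have hp : p ∈ P.filter (fun p => p.1 = S) := hp
          simp only [hP, mem_filter, mem_product] at hp
          obtain ⟨⟨⟨hp1, _⟩, hp2, hp3⟩, hfst⟩ := hp
          show p.2 ∈ E
          simp only [hE, mem_filter, mem_univ, true_and]
          rw [hfst] at hp2 hp3
          exact ⟨hp2, hp3⟩
        · intro v hv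
          have hv : v ∈ E := hv
          simp only [hE, mem_filter, mem_univ, true_and] at hv
          show (S, v) ∈ P.filter (fun p => p.1 = S)
          simp only [hP, hA, mem_filter, mem_product, mem_univ, and_true, true_and]
          exact ⟨⟨hS.1, hS.2⟩, hv.1, hv.2⟩
        · intro p hp
          have hp : p ∈ P.filter (fun p => p.1 = S) := hp
          simp only [hP, mem_filter] at hp
          exact Prod.ext hp.2.symm rfl
        · intro v _; rfl
      rw [hEcard]
      -- E contains univ minus the closed neighborhoods
      set X := S.biUnion (fun u => insert u (G.neighborFinset u)) with hX
      have hsub : univ \ X ⊆ E := by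
        intro v hv
        rw [mem_sdiff] at hv
        have hvX := hv.2
        have hnot : ∀ u ∈ S, v ≠ u ∧ ¬ G.Adj u v := by
          intro u hu
          have h1 : v ∉ insert u (G.neighborFinset u) := fun h =>
            hvX (mem_biUnion.mpr ⟨u, hu, h⟩)
          simp only [mem_insert, SimpleGraph.mem_neighborFinset, not_or] at h1
          exact h1
        have hvS : v ∉ S := fun h => (hnot v h).1 rfl
        simp only [hE, mem_filter, mem_univ, true_and]
        exact ⟨hvS, indep_insert_aux hS.1 (fun u hu => (hnot u hu).2)⟩
      have hXcard : X.card ≤ t * (d + 1) := by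
        calc X.card ≤ ∑ u ∈ S, (insert u (G.neighborFinset u)).card := card_biUnion_le
          _ ≤ ∑ u ∈ S, (d + 1) := by
              apply sum_le_sum
              intro u _
              calc (insert u (G.neighborFinset u)).card ≤ (G.neighborFinset u).card + 1 :=
                    card_insert_le _ _
                _ = d + 1 := by rw [← hreg u]; rfl
          _ = t * (d + 1) := by rw [sum_const, hS.2, smul_eq_mul]
      calc Fintype.card V - t * (d + 1) ≤ Fintype.card V - X.card := by omega
        _ = (univ \ X).card := by
            rw [card_sdiff, inter_univ, card_univ]
        _ ≤ E.card := card_le_card hsub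
    calc (Fintype.card V - t * (d + 1)) * A.card
        = ∑ _S ∈ A, (Fintype.card V - t * (d + 1)) := by rw [sum_const, smul_eq_mul, mul_comm]
      _ ≤ ∑ S ∈ A, (P.filter fun p => p.1 = S).card := sum_le_sum hbound
  have h2 : P.card = (t + 1) * B.card := by
    have hfib : P.card = ∑ T ∈ B, (P.filter fun p => insert p.2 p.1 = T).card := by
      apply card_eq_sum_card_fiberwise
      intro p hp
      have hp : p ∈ P := hp
      simp only [hP, mem_filter, mem_product] at hp
      obtain ⟨⟨hp1, _⟩, hp2, hp3⟩ := hp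
      simp only [hA, mem_filter, mem_univ, true_and] at hp1
      show insert p.2 p.1 ∈ B
      simp only [hB, mem_filter, mem_univ, true_and]
      exact ⟨hp3, by rw [card_insert_of_notMem hp2, hp1.2]⟩
    rw [hfib]
    have hfibcard : ∀ T ∈ B, (P.filter fun p => insert p.2 p.1 = T).card = t + 1 := by
      intro T hT
      simp only [hB, mem_filter, mem_univ, true_and] at hT
      have : (P.filter fun p => insert p.2 p.1 = T).card = T.card := by
        apply card_nbij' (fun p => p.2) (fun v => (T.erase v, v))
        · intro p hp
          have hp : p ∈ P.filter (fun p => insert p.2 p.1 = T) := hp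
          simp only [hP, mem_filter] at hp
          show p.2 ∈ T
          rw [← hp.2]
          exact mem_insert_self _ _
        · intro v hv
          show (T.erase v, v) ∈ P.filter (fun p => insert p.2 p.1 = T)
          simp only [hP, hA, mem_filter, mem_product, mem_univ, and_true, true_and]
          refine ⟨⟨⟨?_, ?_⟩, ?_, ?_⟩, ?_⟩
          · exact indep_subset_aux (erase_subset _ _) hT.1
          · rw [card_erase_of_mem hv, hT.2]; omega
          · exact notMem_erase _ _
          · rw [insert_erase hv]; exact hT.1
          · exact insert_erase hv
        · intro p hp
          have hp : p ∈ P.filter (fun p => insert p.2 p.1 = T) := hp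
          simp only [hP, mem_filter, mem_product] at hp
          obtain ⟨⟨_, hp2, _⟩, heq⟩ := hp
          have : T.erase p.2 = p.1 := by rw [← heq, erase_insert hp2]
          exact Prod.ext this rfl
        · intro v _; rfl
      rw [this, hT.2]
    rw [sum_congr rfl hfibcard, sum_const, smul_eq_mul, mul_comm]
  omega

end Aux

/-- **Theorem 2.1 (refined form).** If `G` is `d`-regular on `n = a(d+1)` vertices, then for
all `0 ≤ t ≤ n`, `i_t(G) ≥ (d+1)^t * binom(a, t)`. -/
theorem stmt4 {V : Type*} [Fintype V] (n d a t : ℕ) (hn : n = a * (d + 1))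
    (hcard : Fintype.card V = n) (G : SimpleGraph V) (hreg : G.IsRegularOfDegree d)
    (ht : t ≤ n) :
    (d + 1) ^ t * Nat.choose a t ≤ indepCountSize G t := by
  clear ht
  induction t with
  | zero =>
    simp only [pow_zero, Nat.choose_zero_right, mul_one, indepCountSize]
    have : (∅ : Finset V) ∈ Finset.univ.filter
        (fun s : Finset V => IsIndepFinset G s ∧ s.card = 0) := by
      simp [IsIndepFinset]
    exact Finset.card_pos.mpr ⟨∅, this⟩
  | succ t ih =>
    by_cases hta : t < a
    · have hstep := count_step G d t hreg
      have hnsub : Fintype.card V - t * (d + 1) = (a - t) * (d + 1) := by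
        rw [hcard, hn, Nat.sub_mul]
      rw [hnsub] at hstep
      have hchain : (t + 1) * ((d + 1) ^ (t + 1) * Nat.choose a (t + 1))
          ≤ (t + 1) * indepCountSize G (t + 1) := by
        calc (t + 1) * ((d + 1) ^ (t + 1) * Nat.choose a (t + 1))
            = (d + 1) ^ (t + 1) * (Nat.choose a (t + 1) * (t + 1)) := by ring
          _ = (d + 1) ^ (t + 1) * (Nat.choose a t * (a - t)) := by
              rw [Nat.choose_succ_right_eq]
          _ = (a - t) * (d + 1) * ((d + 1) ^ t * Nat.choose a t) := by ring
          _ ≤ (a - t) * (d + 1) * indepCountSize G t := by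
              exact Nat.mul_le_mul_left _ ih
          _ ≤ (t + 1) * indepCountSize G (t + 1) := by
              simpa [indepCountSize] using hstep
      exact Nat.le_of_mul_le_mul_left hchain (Nat.succ_pos t)
    · have : Nat.choose a (t + 1) = 0 := Nat.choose_eq_zero_of_lt (by omega)
      simp [this]
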